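/- Fix t₀ < T, N ∈ ℕ, and bounds 0 < a ≤ a_i ≤ b_i ≤ b for i = 1,…,N. Let u, w̄ and (w_k) be elements of L∞(t₀,T;ℝ^N) with i-th components taking values in {0}∪[a_i,b_i] almost everywhere. Suppose w_k → w̄ weakly in L²(t₀,T;ℝ^N) and sgn(w_k) → sgn(w̄) in L¹(t₀,T;ℝ^N), where sgn(x) := 1 if x > 0 and 0 if x = 0, applied componentwise and pointwise. Then Σ_{i=1}^{N} ∫_{{t : sgn(u_i(t))=1 and sgn(w̄_i(t))=1}} |u_i(t) − w̄_i(t)|² dt ≤ liminf_{k→∞} Σ_{i=1}^{N} ∫_{{t : sgn(u_i(t))=1 and sgn(w_{k,i}(t))=1}} |u_i(t) − w_{k,i}(t)|² dt. -/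

import Mathlib

open Filter MeasureTheory
open scoped Topology

/-- `sgn(x) = 1` if `x > 0`, else `0`. -/
noncomputable def sgn01 (x : ℝ) : ℝ := if 0 < x then 1 else 0

lemma sgn01_nonneg (x : ℝ) : 0 ≤ sgn01 x := by unfold sgn01; split <;> norm_num
lemma sgn01_le_one (x : ℝ) : sgn01 x ≤ 1 := by unfold sgn01; split <;> norm_num

lemma measurable_sgn01 : Measurable sgn01 := by
  unfold sgn01
  exact Measurable.ite (measurableSet_lt measurable_const measurable_id)
    measurable_const measurable_const

lemma if_and_eq_sgn01 (p q f : ℝ) :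
    (if 0 < p ∧ 0 < q then f else 0) = sgn01 p * sgn01 q * f := by
  unfold sgn01; by_cases h1 : 0 < p <;> by_cases h2 : 0 < q <;> simp [h1, h2]

lemma abs_sgn01_sub_le_one (x y : ℝ) : |sgn01 x - sgn01 y| ≤ 1 := by
  have h1 := sgn01_nonneg x; have h2 := sgn01_le_one x
  have h3 := sgn01_nonneg y; have h4 := sgn01_le_one y
  rw [abs_sub_le_iff]; constructor <;> linarith

lemma sgn01_mul_mul_abs_le (s t g C : ℝ) (hg : |g| ≤ C) : |sgn01 s * sgn01 t * g| ≤ C := by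
  have h1 := sgn01_nonneg s; have h2 := sgn01_le_one s
  have h3 := sgn01_nonneg t; have h4 := sgn01_le_one t
  have h5 := abs_nonneg g
  rw [abs_mul, abs_mul, abs_of_nonneg h1, abs_of_nonneg h3]
  nlinarith [mul_nonneg h3 h5]

lemma sgn01_mul_sub_abs_le (s t1 t2 g C : ℝ) (hg : |g| ≤ C) :
    |sgn01 s * sgn01 t1 * g - sgn01 s * sgn01 t2 * g| ≤ C * |sgn01 t1 - sgn01 t2| := by
  have h : sgn01 s * sgn01 t1 * g - sgn01 s * sgn01 t2 * g
      = sgn01 s * ((sgn01 t1 - sgn01 t2) * g) := by ring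
  rw [h, abs_mul, abs_of_nonneg (sgn01_nonneg s), abs_mul]
  have h1 := sgn01_nonneg s; have h2 := sgn01_le_one s
  have h5 := abs_nonneg g; have h6 := abs_nonneg (sgn01 t1 - sgn01 t2)
  nlinarith [mul_nonneg h6 h5]

lemma integrable_of_bound' (μ : Measure ℝ) [IsFiniteMeasure μ] (f : ℝ → ℝ)
    (hf : Measurable f) (C : ℝ) (h : ∀ᵐ t ∂μ, |f t| ≤ C) : Integrable f μ := by
  have h2 : MemLp f ⊤ μ :=
    memLp_top_of_bound hf.aestronglyMeasurable C (by simpa [Real.norm_eq_abs] using h)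
  exact memLp_one_iff_integrable.mp (h2.mono_exponent le_top)

lemma sum_integral_abs_sub_le (μ : Measure ℝ) (N : ℕ) (f g : Fin N → ℝ → ℝ) (h : ℝ → ℝ)
    (hf : ∀ i, Integrable (f i) μ) (hg : ∀ i, Integrable (g i) μ) (hh : Integrable h μ)
    (hbd : ∀ᵐ t ∂μ, ∑ i, |f i t - g i t| ≤ h t) :
    |(∑ i, ∫ t, f i t ∂μ) - ∑ i, ∫ t, g i t ∂μ| ≤ ∫ t, h t ∂μ := by
  have hfi : Integrable (fun t => ∑ i, f i t) μ := integrable_finset_sum _ fun i _ => hf i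
  have hgi : Integrable (fun t => ∑ i, g i t) μ := integrable_finset_sum _ fun i _ => hg i
  rw [← integral_finset_sum _ fun i _ => hf i, ← integral_finset_sum _ fun i _ => hg i,
      ← integral_sub hfi hgi]
  calc |∫ t, ((∑ i, f i t) - ∑ i, g i t) ∂μ|
      ≤ ∫ t, |(∑ i, f i t) - ∑ i, g i t| ∂μ := by
        simpa [Real.norm_eq_abs] using
          norm_integral_le_integral_norm (μ := μ) (fun t => (∑ i, f i t) - ∑ i, g i t)
    _ ≤ ∫ t, h t ∂μ := by
        refine integral_mono_ae (hfi.sub hgi).abs hh ?_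
        filter_upwards [hbd] with t ht
        calc |(∑ i, f i t) - ∑ i, g i t| = |∑ i, (f i t - g i t)| := by
              rw [Finset.sum_sub_distrib]
          _ ≤ ∑ i, |f i t - g i t| := Finset.abs_sum_le_sum_abs _ _
          _ ≤ h t := ht

/-- Lemma 4.9 / `lem:something_is_lsc`: lower semicontinuity of the squared `L²` norm
restricted to the set where both controls are active. -/
theorem lsc_of_active_set_norm
    (t₀ T a b : ℝ) (ht : t₀ < T) (ha : 0 < a) (N : ℕ)
    (aa bb : Fin N → ℝ)
    (haa : ∀ i, a ≤ aa i) (habi : ∀ i, aa i ≤ bb i) (hbb : ∀ i, bb i ≤ b)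
    (μ : Measure ℝ) (hμ : μ = volume.restrict (Set.Ioo t₀ T))
    (u wbar : ℝ → Fin N → ℝ) (w : ℕ → ℝ → Fin N → ℝ)
    (hu_meas : ∀ i, Measurable fun t : ℝ => u t i)
    (hwbar_meas : ∀ i, Measurable fun t : ℝ => wbar t i)
    (hw_meas : ∀ k i, Measurable fun t : ℝ => w k t i)
    -- values in `{0} ∪ [aᵢ,bᵢ]` a.e.
    (hu_vals : ∀ i, ∀ᵐ t ∂μ, u t i ∈ ({0} : Set ℝ) ∪ Set.Icc (aa i) (bb i))
    (hwbar_vals : ∀ i, ∀ᵐ t ∂μ, wbar t i ∈ ({0} : Set ℝ) ∪ Set.Icc (aa i) (bb i))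
    (hw_vals : ∀ k i, ∀ᵐ t ∂μ, w k t i ∈ ({0} : Set ℝ) ∪ Set.Icc (aa i) (bb i))
    -- weak convergence `w_k ⇀ w̄` in `L²(t₀,T;ℝᴺ)`
    (hweak : ∀ ψ : ℝ → Fin N → ℝ, MemLp ψ 2 μ →
      Tendsto (fun k : ℕ => ∫ t, ∑ i : Fin N, w k t i * ψ t i ∂μ) atTop
        (𝓝 (∫ t, ∑ i : Fin N, wbar t i * ψ t i ∂μ)))
    -- convergence `sgn(w_k) → sgn(w̄)` in `L¹(t₀,T;ℝᴺ)`
    (hsgn : Tendsto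
      (fun k : ℕ => ∫ t, ∑ i : Fin N, |sgn01 (w k t i) - sgn01 (wbar t i)| ∂μ)
      atTop (𝓝 0)) :
    ∑ i : Fin N,
        ∫ t, Set.indicator {t : ℝ | 0 < u t i ∧ 0 < wbar t i}
          (fun t => |u t i - wbar t i| ^ 2) t ∂μ ≤
      liminf (fun k : ℕ => ∑ i : Fin N,
        ∫ t, Set.indicator {t : ℝ | 0 < u t i ∧ 0 < w k t i}
          (fun t => |u t i - w k t i| ^ 2) t ∂μ) atTop := by
  haveI : IsFiniteMeasure μ := by
    constructor
    rw [hμ, Measure.restrict_apply_univ, Real.volume_Ioo]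
    exact ENNReal.ofReal_lt_top
  clear hμ ht
  -- rewrite indicators as sgn01 products
  simp only [Set.indicator_apply, Set.mem_setOf_eq, if_and_eq_sgn01, sq_abs]
  set b' : ℝ := max b 0 with hb'def
  have hb' : (0:ℝ) ≤ b' := le_max_right _ _
  -- a.e. bounds
  have hIcc : ∀ (v : ℝ → Fin N → ℝ),
      (∀ i, ∀ᵐ t ∂μ, v t i ∈ ({0} : Set ℝ) ∪ Set.Icc (aa i) (bb i)) →
      ∀ᵐ t ∂μ, ∀ i, 0 ≤ v t i ∧ v t i ≤ b' := by
    intro v hv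
    rw [ae_all_iff]
    intro i
    filter_upwards [hv i] with t htv
    rcases htv with h | h
    · simp only [Set.mem_singleton_iff] at h
      exact ⟨le_of_eq h.symm, h ▸ hb'⟩
    · exact ⟨(ha.le.trans (haa i)).trans h.1, h.2.trans ((hbb i).trans (le_max_left _ _))⟩
  have hub := hIcc u hu_vals
  have hwb := hIcc wbar hwbar_vals
  have hwk : ∀ᵐ t ∂μ, ∀ k, ∀ i, 0 ≤ w k t i ∧ w k t i ≤ b' := by
    rw [ae_all_iff]; intro k; exact hIcc (w k) (hw_vals k)
  -- measurability shorthands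
  have mσu : ∀ i, Measurable fun t => sgn01 (u t i) := fun i => measurable_sgn01.comp (hu_meas i)
  have mσw : ∀ i, Measurable fun t => sgn01 (wbar t i) :=
    fun i => measurable_sgn01.comp (hwbar_meas i)
  have mσk : ∀ k i, Measurable fun t => sgn01 (w k t i) :=
    fun k i => measurable_sgn01.comp (hw_meas k i)
  -- sgn difference sums
  set sd : ℕ → ℝ → ℝ := fun k t => ∑ i, |sgn01 (w k t i) - sgn01 (wbar t i)| with hsddef
  have msd : ∀ k, Measurable (sd k) :=
    fun k => Finset.measurable_sum _ fun i _ => ((mσk k i).sub (mσw i)).abs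
  have isd : ∀ k, Integrable (sd k) μ := by
    intro k
    refine integrable_of_bound' μ _ (msd k) N (ae_of_all _ fun t => ?_)
    rw [abs_of_nonneg (Finset.sum_nonneg fun i _ => abs_nonneg _)]
    calc sd k t ≤ ∑ _i : Fin N, (1:ℝ) :=
          Finset.sum_le_sum fun i _ => abs_sgn01_sub_le_one _ _
      _ = N := by simp
  -- generic integrability of σ·σ·g
  have intgr : ∀ (x y g : ℝ → ℝ) (C : ℝ), Measurable x → Measurable y → Measurable g →
      (∀ᵐ t ∂μ, |g t| ≤ C) → Integrable (fun t => sgn01 (x t) * sgn01 (y t) * g t) μ := by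
    intro x y g C hx hy hg hc
    refine integrable_of_bound' μ _
      (((measurable_sgn01.comp hx).mul (measurable_sgn01.comp hy)).mul hg) C ?_
    filter_upwards [hc] with t htc
    exact sgn01_mul_mul_abs_le _ _ _ _ htc
  -- the generic convergence lemma
  have key : ∀ (G : Fin N → ℝ → ℝ) (C : ℝ), (∀ i, Measurable (G i)) →
      (∀ᵐ t ∂μ, ∀ i, |G i t| ≤ C) →
      Tendsto (fun k => ∑ i, ∫ t, sgn01 (u t i) * sgn01 (w k t i) * G i t ∂μ) atTop
        (𝓝 (∑ i, ∫ t, sgn01 (u t i) * sgn01 (wbar t i) * G i t ∂μ)) := by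
    intro G C hGm hGC
    have hik : ∀ k i, Integrable (fun t => sgn01 (u t i) * sgn01 (w k t i) * G i t) μ :=
      fun k i => intgr _ _ _ C (hu_meas i) (hw_meas k i) (hGm i) (hGC.mono fun t htc => htc i)
    have hib : ∀ i, Integrable (fun t => sgn01 (u t i) * sgn01 (wbar t i) * G i t) μ :=
      fun i => intgr _ _ _ C (hu_meas i) (hwbar_meas i) (hGm i) (hGC.mono fun t htc => htc i)
    have hdiff : ∀ k,
        |(∑ i, ∫ t, sgn01 (u t i) * sgn01 (w k t i) * G i t ∂μ) -
          ∑ i, ∫ t, sgn01 (u t i) * sgn01 (wbar t i) * G i t ∂μ| ≤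
          C * ∫ t, sd k t ∂μ := by
      intro k
      rw [← integral_const_mul]
      refine sum_integral_abs_sub_le μ N _ _ _ (hik k) hib ((isd k).const_mul C) ?_
      filter_upwards [hGC] with t htc
      rw [hsddef, Finset.mul_sum]
      exact Finset.sum_le_sum fun i _ => sgn01_mul_sub_abs_le _ _ _ _ _ (htc i)
    have h0 : Tendsto (fun k =>
        (∑ i, ∫ t, sgn01 (u t i) * sgn01 (w k t i) * G i t ∂μ) -
          ∑ i, ∫ t, sgn01 (u t i) * sgn01 (wbar t i) * G i t ∂μ) atTop (𝓝 0) := by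
      refine squeeze_zero_norm (fun k => by simpa [Real.norm_eq_abs] using hdiff k) ?_
      simpa using hsgn.const_mul C
    have := h0.add_const (∑ i, ∫ t, sgn01 (u t i) * sgn01 (wbar t i) * G i t ∂μ)
    simpa using this
  -- a.e. bounds for the specific integrand factors
  have hGA : ∀ᵐ t ∂μ, ∀ i, |(u t i - wbar t i)^2| ≤ b' * b' := by
    filter_upwards [hub, hwb] with t h1 h2 i
    have h3 := (h1 i).1; have h4 := (h1 i).2; have h5 := (h2 i).1; have h6 := (h2 i).2
    rw [abs_of_nonneg (sq_nonneg _)]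
    nlinarith
  have hGB : ∀ᵐ t ∂μ, ∀ i, |2 * (u t i - wbar t i) * wbar t i| ≤ 2 * (b' * b') := by
    filter_upwards [hub, hwb] with t h1 h2 i
    have h3 := (h1 i).1; have h4 := (h1 i).2; have h5 := (h2 i).1; have h6 := (h2 i).2
    have habs : |u t i - wbar t i| ≤ b' := abs_le.2 ⟨by linarith, by linarith⟩
    have habsw : |wbar t i| ≤ b' := abs_le.2 ⟨by linarith, by linarith⟩
    rw [abs_mul, abs_mul, abs_two]
    nlinarith [mul_le_mul habs habsw (abs_nonneg _) ((abs_nonneg _).trans habs)]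
  have hGC' : ∀ k, ∀ᵐ t ∂μ, ∀ i, |2 * (u t i - wbar t i) * w k t i| ≤ 2 * (b' * b') := by
    intro k
    filter_upwards [hub, hwb, hwk] with t h1 h2 h3 i
    have h4 := (h1 i).1; have h5 := (h1 i).2; have h6 := (h2 i).1; have h7 := (h2 i).2
    have h8 := (h3 k i).1; have h9 := (h3 k i).2
    have habs : |u t i - wbar t i| ≤ b' := abs_le.2 ⟨by linarith, by linarith⟩
    have habsw : |w k t i| ≤ b' := abs_le.2 ⟨by linarith, by linarith⟩
    rw [abs_mul, abs_mul, abs_two]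
    nlinarith [mul_le_mul habs habsw (abs_nonneg _) ((abs_nonneg _).trans habs)]
  have hGF : ∀ k, ∀ᵐ t ∂μ, ∀ i, |(u t i - w k t i)^2| ≤ b' * b' := by
    intro k
    filter_upwards [hub, hwk] with t h1 h3 i
    have h4 := (h1 i).1; have h5 := (h1 i).2; have h8 := (h3 k i).1; have h9 := (h3 k i).2
    rw [abs_of_nonneg (sq_nonneg _)]
    nlinarith
  -- measurability of factors
  have mA : ∀ i, Measurable fun t => (u t i - wbar t i)^2 :=
    fun i => ((hu_meas i).sub (hwbar_meas i)).pow_const 2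
  have mB : ∀ i, Measurable fun t => 2 * (u t i - wbar t i) * wbar t i :=
    fun i => (measurable_const.mul ((hu_meas i).sub (hwbar_meas i))).mul (hwbar_meas i)
  have mC : ∀ k i, Measurable fun t => 2 * (u t i - wbar t i) * w k t i :=
    fun k i => (measurable_const.mul ((hu_meas i).sub (hwbar_meas i))).mul (hw_meas k i)
  have mF : ∀ k i, Measurable fun t => (u t i - w k t i)^2 :=
    fun k i => ((hu_meas i).sub (hw_meas k i)).pow_const 2
  -- integrability of all integrands
  have iA : ∀ k i, Integrable
      (fun t => sgn01 (u t i) * sgn01 (w k t i) * (u t i - wbar t i)^2) μ :=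
    fun k i => intgr _ _ _ (b' * b') (hu_meas i) (hw_meas k i) (mA i)
      (hGA.mono fun t htc => htc i)
  have iB : ∀ k i, Integrable
      (fun t => sgn01 (u t i) * sgn01 (w k t i) * (2 * (u t i - wbar t i) * wbar t i)) μ :=
    fun k i => intgr _ _ _ (2 * (b' * b')) (hu_meas i) (hw_meas k i) (mB i)
      (hGB.mono fun t htc => htc i)
  have iC : ∀ k i, Integrable
      (fun t => sgn01 (u t i) * sgn01 (w k t i) * (2 * (u t i - wbar t i) * w k t i)) μ :=
    fun k i => intgr _ _ _ (2 * (b' * b')) (hu_meas i) (hw_meas k i) (mC k i)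
      ((hGC' k).mono fun t htc => htc i)
  have iF : ∀ k i, Integrable
      (fun t => sgn01 (u t i) * sgn01 (w k t i) * (u t i - w k t i)^2) μ :=
    fun k i => intgr _ _ _ (b' * b') (hu_meas i) (hw_meas k i) (mF k i)
      ((hGF k).mono fun t htc => htc i)
  -- convergence of the A- and B-terms
  have hAconv := key (fun i t => (u t i - wbar t i)^2) (b' * b') mA hGA
  have hBconv := key (fun i t => 2 * (u t i - wbar t i) * wbar t i) (2 * (b' * b')) mB hGB
  -- the test function for weak convergence
  set ψ : ℝ → Fin N → ℝ :=
    fun t i => sgn01 (u t i) * sgn01 (wbar t i) * (2 * (u t i - wbar t i)) with hψdef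
  have hψm : Measurable ψ := measurable_pi_lambda _ fun i =>
    ((mσu i).mul (mσw i)).mul (measurable_const.mul ((hu_meas i).sub (hwbar_meas i)))
  have hψabs : ∀ᵐ t ∂μ, ∀ i, |ψ t i| ≤ 2 * b' := by
    filter_upwards [hub, hwb] with t h1 h2 i
    have h3 := (h1 i).1; have h4 := (h1 i).2; have h5 := (h2 i).1; have h6 := (h2 i).2
    simp only [hψdef]
    refine sgn01_mul_mul_abs_le _ _ _ _ ?_
    rw [abs_mul, abs_two]
    have habs : |u t i - wbar t i| ≤ b' := abs_le.2 ⟨by linarith, by linarith⟩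
    linarith
  have hψb : ∀ᵐ t ∂μ, ‖ψ t‖ ≤ 2 * b' := by
    filter_upwards [hψabs] with t h1
    rw [pi_norm_le_iff_of_nonneg (by positivity)]
    intro i
    rw [Real.norm_eq_abs]
    exact h1 i
  have hψ2 : MemLp ψ 2 μ :=
    (memLp_top_of_bound hψm.aestronglyMeasurable _ hψb).mono_exponent le_top
  have hCw := hweak ψ hψ2
  -- integrability of w⬝ψ products
  have iwψ : ∀ k i, Integrable (fun t => w k t i * ψ t i) μ := by
    intro k i
    refine integrable_of_bound' μ _ ((hw_meas k i).mul ((measurable_pi_apply i).comp hψm))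
      (b' * (2 * b')) ?_
    filter_upwards [hwk, hψabs] with t h1 h2
    rw [abs_mul, abs_of_nonneg (h1 k i).1]
    exact mul_le_mul (h1 k i).2 (h2 i) (abs_nonneg _) hb'
  have iwbψ : ∀ i, Integrable (fun t => wbar t i * ψ t i) μ := by
    intro i
    refine integrable_of_bound' μ _ ((hwbar_meas i).mul ((measurable_pi_apply i).comp hψm))
      (b' * (2 * b')) ?_
    filter_upwards [hwb, hψabs] with t h1 h2
    rw [abs_mul, abs_of_nonneg (h1 i).1]
    exact mul_le_mul (h1 i).2 (h2 i) (abs_nonneg _) hb'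
  -- identify the weak limit with the B-limit
  have hCbar : (∫ t, ∑ i, wbar t i * ψ t i ∂μ)
      = ∑ i, ∫ t, sgn01 (u t i) * sgn01 (wbar t i) * (2 * (u t i - wbar t i) * wbar t i) ∂μ := by
    rw [integral_finset_sum _ fun i _ => iwbψ i]
    refine Finset.sum_congr rfl fun i _ => ?_
    refine integral_congr_ae (ae_of_all _ fun t => ?_)
    simp only [hψdef]
    ring
  -- error estimate for the C-term
  have hCdiff : ∀ k,
      |(∑ i, ∫ t, sgn01 (u t i) * sgn01 (w k t i) * (2 * (u t i - wbar t i) * w k t i) ∂μ) -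
        ∫ t, ∑ i, w k t i * ψ t i ∂μ| ≤ (2 * (b' * b')) * ∫ t, sd k t ∂μ := by
    intro k
    rw [integral_finset_sum _ fun i _ => iwψ k i, ← integral_const_mul]
    refine sum_integral_abs_sub_le μ N _ _ _ (fun i => iC k i) (fun i => iwψ k i)
      ((isd k).const_mul _) ?_
    filter_upwards [hGC' k] with t htc
    simp only [hsddef]
    rw [Finset.mul_sum]
    refine Finset.sum_le_sum fun i _ => ?_
    have hrw : w k t i * ψ t i
        = sgn01 (u t i) * sgn01 (wbar t i) * (2 * (u t i - wbar t i) * w k t i) := by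
      simp only [hψdef]; ring
    rw [hrw]
    exact sgn01_mul_sub_abs_le _ _ _ _ _ (htc i)
  -- convergence of the C-term
  have hCconv : Tendsto
      (fun k => ∑ i, ∫ t, sgn01 (u t i) * sgn01 (w k t i) * (2 * (u t i - wbar t i) * w k t i) ∂μ)
      atTop (𝓝 (∑ i, ∫ t, sgn01 (u t i) * sgn01 (wbar t i)
        * (2 * (u t i - wbar t i) * wbar t i) ∂μ)) := by
    have h4 : Tendsto (fun k =>
        (∑ i, ∫ t, sgn01 (u t i) * sgn01 (w k t i) * (2 * (u t i - wbar t i) * w k t i) ∂μ) -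
          ∫ t, ∑ i, w k t i * ψ t i ∂μ) atTop (𝓝 0) := by
      refine squeeze_zero_norm (fun k => by simpa [Real.norm_eq_abs] using hCdiff k) ?_
      simpa using hsgn.const_mul (2 * (b' * b'))
    have h5 := h4.add hCw
    rw [hCbar] at h5
    simpa using h5
  -- combined convergence
  have hG' : Tendsto (fun k =>
      (∑ i, ∫ t, sgn01 (u t i) * sgn01 (w k t i) * (u t i - wbar t i)^2 ∂μ) +
      (∑ i, ∫ t, sgn01 (u t i) * sgn01 (w k t i) * (2 * (u t i - wbar t i) * wbar t i) ∂μ) -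
      (∑ i, ∫ t, sgn01 (u t i) * sgn01 (w k t i) * (2 * (u t i - wbar t i) * w k t i) ∂μ))
      atTop (𝓝 (∑ i, ∫ t, sgn01 (u t i) * sgn01 (wbar t i) * (u t i - wbar t i)^2 ∂μ)) := by
    have := (hAconv.add hBconv).sub hCconv
    simpa using this
  -- the pointwise/integral comparison
  have hFG : ∀ k,
      (∑ i, ∫ t, sgn01 (u t i) * sgn01 (w k t i) * (u t i - wbar t i)^2 ∂μ) +
      (∑ i, ∫ t, sgn01 (u t i) * sgn01 (w k t i) * (2 * (u t i - wbar t i) * wbar t i) ∂μ) -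
      (∑ i, ∫ t, sgn01 (u t i) * sgn01 (w k t i) * (2 * (u t i - wbar t i) * w k t i) ∂μ) ≤
      ∑ i, ∫ t, sgn01 (u t i) * sgn01 (w k t i) * (u t i - w k t i)^2 ∂μ := by
    intro k
    rw [← Finset.sum_add_distrib, ← Finset.sum_sub_distrib]
    refine Finset.sum_le_sum fun i _ => ?_
    have ecomb : (∫ t, (sgn01 (u t i) * sgn01 (w k t i) * (u t i - wbar t i)^2
          + sgn01 (u t i) * sgn01 (w k t i) * (2 * (u t i - wbar t i) * wbar t i)
          - sgn01 (u t i) * sgn01 (w k t i) * (2 * (u t i - wbar t i) * w k t i)) ∂μ)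
        = (∫ t, sgn01 (u t i) * sgn01 (w k t i) * (u t i - wbar t i)^2 ∂μ)
          + (∫ t, sgn01 (u t i) * sgn01 (w k t i) * (2 * (u t i - wbar t i) * wbar t i) ∂μ)
          - ∫ t, sgn01 (u t i) * sgn01 (w k t i) * (2 * (u t i - wbar t i) * w k t i) ∂μ := by
      have iAB : Integrable (fun t => sgn01 (u t i) * sgn01 (w k t i) * (u t i - wbar t i)^2
          + sgn01 (u t i) * sgn01 (w k t i) * (2 * (u t i - wbar t i) * wbar t i)) μ :=
        (iA k i).add (iB k i)
      rw [integral_sub iAB (iC k i), integral_add (iA k i) (iB k i)]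
    rw [← ecomb]
    refine integral_mono_ae (((iA k i).add (iB k i)).sub (iC k i)) (iF k i)
      (ae_of_all _ fun t => ?_)
    have s1 := sgn01_nonneg (u t i); have s2 := sgn01_nonneg (w k t i)
    dsimp only
    nlinarith [mul_nonneg (mul_nonneg s1 s2) (sq_nonneg (wbar t i - w k t i))]
  -- conclude via liminf monotonicity
  have hGbdd := hG'.isBoundedUnder_ge
  have hFbdd : atTop.IsBoundedUnder (· ≥ ·)
      (fun k => ∑ i, ∫ t, sgn01 (u t i) * sgn01 (w k t i) * (u t i - w k t i)^2 ∂μ) := by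
    obtain ⟨c, hc⟩ := hGbdd
    refine ⟨c, ?_⟩
    rw [eventually_map] at hc ⊢
    filter_upwards [hc] with k hk
    exact le_trans hk (hFG k)
  have hFcobdd : atTop.IsCoboundedUnder (· ≥ ·)
      (fun k => ∑ i, ∫ t, sgn01 (u t i) * sgn01 (w k t i) * (u t i - w k t i)^2 ∂μ) := by
    refine isCoboundedUnder_ge_of_eventually_le atTop (x := ∑ _i : Fin N, ∫ _t, (b' * b') ∂μ)
      (Eventually.of_forall fun k => ?_)
    refine Finset.sum_le_sum fun i _ => ?_
    refine integral_mono_ae (iF k i) (integrable_const _) ?_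
    filter_upwards [hGF k] with t htc
    exact le_of_abs_le (sgn01_mul_mul_abs_le _ _ _ _ (htc i))
  refine le_trans (le_of_eq hG'.liminf_eq.symm) ?_
  exact liminf_le_liminf (Eventually.of_forall hFG) hGbdd hFcobdd
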